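/- Under Assumption 1, let p₀ = δ_M. Then: (i) for each fixed x ∈ 𝓜, the sequence i ↦ s(x,p_i) is nondecreasing and s(x,p*) ≥ sup_{i≥0} s(x,p_i); (ii) p* satisfies p*(dx) = (1−β)·(sup_{i≥0} s(x,p_i))·p*(dx) + β q(dx); (iii) p* ≺ (1−β) s(x,p*) p*(dx) + β q(dx), i.e. the measure (1−β) s(x,p*) p*(dx) + β q(dx) − p*(dx) is nonnegative; (iv) if moreover u ↦ w(x,u) is continuous on P(𝓜) in the total variation norm for each x ∈ 𝓜, then the relation in (iii) is an equality of measures. -/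

import Mathlib

open MeasureTheory Set Filter

/-- Selective advantage `s(x,u) = w(x,u) / ∫ w(y,u) u(dy)` if the mean fitness is
positive, and `1` otherwise. -/
noncomputable def sel (w : ℝ → MeasureTheory.Measure ℝ → ℝ)
    (u : MeasureTheory.Measure ℝ) (x : ℝ) : ℝ :=
  if 0 < ∫ y, w y u ∂u then w x u / ∫ y, w y u ∂u else 1

/-- The sequence of type distributions:
`p_i(dx) = (1-β) s(x,p_{i-1}) p_{i-1}(dx) + β q(dx)`. -/
noncomputable def evol (w : ℝ → MeasureTheory.Measure ℝ → ℝ) (β : ℝ)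
    (q p₀ : MeasureTheory.Measure ℝ) : ℕ → MeasureTheory.Measure ℝ
  | 0 => p₀
  | i + 1 =>
      ENNReal.ofReal (1 - β) •
          ((evol w β q p₀ i).withDensity fun x =>
            ENNReal.ofReal (sel w (evol w β q p₀ i) x))
        + ENNReal.ofReal β • q

/-- Convergence in total variation (uniform convergence over all measurable sets). -/
def TendstoTV (p : ℕ → MeasureTheory.Measure ℝ) (μ : MeasureTheory.Measure ℝ) : Prop :=
  ∀ ε : ℝ, 0 < ε → ∃ N : ℕ, ∀ i ≥ N, ∀ A : Set ℝ, MeasurableSet A →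
    |((p i) A).toReal - (μ A).toReal| < ε

/-- Weak convergence of measures (tested against bounded continuous functions). -/
def TendstoWeak (p : ℕ → MeasureTheory.Measure ℝ) (μ : MeasureTheory.Measure ℝ) : Prop :=
  ∀ f : BoundedContinuousFunction ℝ ℝ,
    Filter.Tendsto (fun i => ∫ x, f x ∂(p i)) Filter.atTop (nhds (∫ x, f x ∂μ))

/-- Assumption 1: if `v` restricted to `[0,M)` is a component of `u` restricted to `[0,M)`,
then `s(·,u) ≥ s(·,v)` on `[0,M]`. -/
def Assumption1 (M : ℝ) (w : ℝ → MeasureTheory.Measure ℝ → ℝ) : Prop :=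
  ∀ u v : MeasureTheory.Measure ℝ,
    IsProbabilityMeasure u → IsProbabilityMeasure v →
    u ((Set.Icc 0 M)ᶜ) = 0 → v ((Set.Icc 0 M)ᶜ) = 0 →
    v.restrict (Set.Ico 0 M) ≤ u.restrict (Set.Ico 0 M) →
    ∀ x ∈ Set.Icc (0:ℝ) M, sel w v x ≤ sel w u x

/-- Assumption 2: for every `0 ≤ a < M` and `0 < ε < 1` there is `c(a,ε) > 1` such that
`s(M,u) ≥ c(a,ε) s(M,v)` whenever `v_{[0,M)} ≺ u_{[0,M)}` and `D_u(a) ≥ D_v(a) + ε`. -/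
def Assumption2 (M : ℝ) (w : ℝ → MeasureTheory.Measure ℝ → ℝ) : Prop :=
  ∀ a : ℝ, 0 ≤ a → a < M → ∀ ε : ℝ, 0 < ε → ε < 1 → ∃ c : ℝ, 1 < c ∧
    ∀ u v : MeasureTheory.Measure ℝ,
      IsProbabilityMeasure u → IsProbabilityMeasure v →
      u ((Set.Icc 0 M)ᶜ) = 0 → v ((Set.Icc 0 M)ᶜ) = 0 →
      v.restrict (Set.Ico 0 M) ≤ u.restrict (Set.Ico 0 M) →
      (v (Set.Icc 0 a)).toReal + ε ≤ (u (Set.Icc 0 a)).toReal →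
      c * sel w v M ≤ sel w u M


section Stmt10Helpers

open ENNReal MeasureTheory Set Filter

variable {w : ℝ → MeasureTheory.Measure ℝ → ℝ}

lemma sel_nonneg (hw : ∀ x u, 0 ≤ w x u) (u : MeasureTheory.Measure ℝ) (x : ℝ) :
    0 ≤ sel w u x := by
  by_cases h : 0 < ∫ y, w y u ∂u
  · rw [sel, if_pos h]; exact div_nonneg (hw x u) h.le
  · rw [sel, if_neg h]; norm_num

lemma sel_measurable (hw_meas : ∀ u, Measurable fun x => w x u)
    (u : MeasureTheory.Measure ℝ) : Measurable (sel w u) := by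
  by_cases h : 0 < ∫ y, w y u ∂u
  · have : sel w u = fun x => w x u / ∫ y, w y u ∂u := by
      funext x; rw [sel, if_pos h]
    rw [this]; exact (hw_meas u).div_const _
  · have : sel w u = fun _ => (1 : ℝ) := by funext x; rw [sel, if_neg h]
    rw [this]; exact measurable_const

lemma lintegral_sel (hw : ∀ x u, 0 ≤ w x u) (u : MeasureTheory.Measure ℝ)
    [IsProbabilityMeasure u] :
    ∫⁻ x, ENNReal.ofReal (sel w u x) ∂u = 1 := by
  by_cases h : 0 < ∫ y, w y u ∂u
  · have hint : Integrable (fun y => w y u) u := by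
      by_contra hc
      rw [integral_undef hc] at h; exact lt_irrefl 0 h
    have hsel : ∀ x, sel w u x = w x u / ∫ y, w y u ∂u := fun x => by rw [sel, if_pos h]
    simp only [hsel]
    rw [← ofReal_integral_eq_lintegral_ofReal (hint.div_const _)
        (Filter.Eventually.of_forall fun x => div_nonneg (hw x u) h.le)]
    rw [integral_div, div_self h.ne']
    simp
  · have hsel : ∀ x, sel w u x = (1:ℝ) := fun x => by rw [sel, if_neg h]
    simp [hsel]

/-- lintegral against a setwise supremum of a monotone sequence of measures. -/
lemma lintegral_of_iSup_meas {ν : MeasureTheory.Measure ℝ} {νs : ℕ → MeasureTheory.Measure ℝ}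
    (hmono : Monotone νs)
    (h : ∀ B : Set ℝ, MeasurableSet B → (⨆ j, νs j B) = ν B)
    {g : ℝ → ℝ≥0∞} (hg : Measurable g) :
    (⨆ j, ∫⁻ x, g x ∂(νs j)) = ∫⁻ x, g x ∂ν := by
  have hsimple : ∀ φ : SimpleFunc ℝ ℝ≥0∞, (⨆ j, φ.lintegral (νs j)) = φ.lintegral ν := by
    intro φ
    simp only [SimpleFunc.lintegral]
    refine Eq.trans (ENNReal.finsetSum_iSup_of_monotone
      (f := fun a j => a * νs j (⇑φ ⁻¹' {a}))
      (fun a i j hij => mul_le_mul_right (Measure.le_iff'.mp (hmono hij) _) a)).symm ?_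
    refine Finset.sum_congr rfl fun a _ => ?_
    rw [← ENNReal.mul_iSup, h _ (φ.measurableSet_fiber a)]
  rw [lintegral_eq_iSup_eapprox_lintegral hg]
  have heq : ∀ j, ∫⁻ x, g x ∂(νs j) = ⨆ n, (SimpleFunc.eapprox g n).lintegral (νs j) :=
    fun j => lintegral_eq_iSup_eapprox_lintegral hg
  simp only [heq]
  rw [iSup_comm]
  exact iSup_congr fun n => hsimple _

/-- lintegral of an indicator of a subset of `t` against a restricted measure. -/
lemma indicator_lintegral_restrict {μ : MeasureTheory.Measure ℝ} {s t : Set ℝ}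
    (hs : MeasurableSet s) (hsub : s ⊆ t) (f : ℝ → ℝ≥0∞) :
    ∫⁻ x, s.indicator f x ∂(μ.restrict t) = ∫⁻ x in s, f x ∂μ := by
  rw [lintegral_indicator hs, Measure.restrict_restrict hs,
    Set.inter_eq_self_of_subset_left hsub]

lemma setLIntegral_mono_meas {M : ℝ} {μ ν : MeasureTheory.Measure ℝ}
    (hle : μ.restrict (Set.Ico 0 M) ≤ ν.restrict (Set.Ico 0 M)) {f g : ℝ → ℝ≥0∞}
    (hfg : ∀ x ∈ Set.Icc (0:ℝ) M, f x ≤ g x) {s : Set ℝ} (hs : MeasurableSet s)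
    (hsub : s ⊆ Set.Ico 0 M) :
    ∫⁻ x in s, f x ∂μ ≤ ∫⁻ x in s, g x ∂ν := by
  rw [← indicator_lintegral_restrict hs hsub f, ← indicator_lintegral_restrict hs hsub g]
  refine lintegral_mono' hle fun x => ?_
  by_cases hx : x ∈ s
  · simpa [Set.indicator_of_mem hx] using
      hfg x (Set.Ico_subset_Icc_self (hsub hx))
  · simp [Set.indicator_of_notMem hx]

/-- Splitting a set-lintegral over `A` into the `[0,M)` part and the atom at `M`,
for a measure vanishing outside `[0,M]`. -/
lemma split_lintegral {M : ℝ} (hM0 : 0 ≤ M) (μ : MeasureTheory.Measure ℝ)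
    (hμ : μ ((Set.Icc 0 M)ᶜ) = 0) (f : ℝ → ℝ≥0∞) {A : Set ℝ} (hA : MeasurableSet A) :
    ∫⁻ x in A, f x ∂μ =
      ∫⁻ x in A ∩ Set.Ico 0 M, f x ∂μ + f M * μ (A ∩ {M}) := by
  have h1 : ∫⁻ x in A, f x ∂μ = ∫⁻ x in A ∩ Set.Icc 0 M, f x ∂μ := by
    nth_rewrite 1 [← Set.inter_union_compl A (Set.Icc 0 M)]
    rw [lintegral_union (hA.inter measurableSet_Icc.compl)
      (Set.disjoint_left.mpr fun x hx hx2 => hx2.2 hx.2)]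
    rw [setLIntegral_measure_zero _ _ (measure_mono_null Set.inter_subset_right hμ), add_zero]
  have h2 : A ∩ Set.Icc 0 M = (A ∩ Set.Ico 0 M) ∪ (A ∩ {M}) := by
    rw [← Set.inter_union_distrib_left, Set.Ico_union_right hM0]
  have h3 : ∫⁻ x in A ∩ {M}, f x ∂μ = f M * μ (A ∩ {M}) := by
    by_cases hMA : M ∈ A
    · rw [Set.inter_eq_right.mpr (Set.singleton_subset_iff.mpr hMA)]
      exact lintegral_singleton f M
    · have : A ∩ {M} = ∅ := by
        ext x
        simp only [Set.mem_inter_iff, Set.mem_singleton_iff, Set.mem_empty_iff_false,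
          iff_false, not_and]
        rintro hx rfl; exact hMA hx
      rw [this]; simp
  rw [h1, h2, lintegral_union (hA.inter (measurableSet_singleton M))
    (Set.disjoint_left.mpr fun x hx hx2 => by
      rw [Set.mem_inter_iff, Set.mem_singleton_iff] at hx2
      exact absurd (hx2.2 ▸ hx.2.2) (lt_irrefl M)), h3]

end Stmt10Helpers

open scoped ENNReal in
/-- Corollary "limit=" of the paper. Under Assumption 1, with `p₀ = δ_M`:
(i) `i ↦ s(x,p_i)` is nondecreasing and `s(x,p*) ≥ ⨆ i, s(x,p_i)` for each `x ∈ [0,M]`;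
(ii) `p*(dx) = (1-β)(⨆ i, s(x,p_i)) p*(dx) + β q(dx)`;
(iii) `p* ≺ (1-β) s(x,p*) p*(dx) + β q(dx)`;
(iv) if moreover `u ↦ w(x,u)` is continuous in total variation on `P([0,M])` for each
`x ∈ [0,M]`, then (iii) is an equality of measures. -/
theorem stmt10 (M : ℝ) (hM : 0 < M) (β : ℝ) (hβ : β ∈ Set.Ioo (0:ℝ) 1)
    (q : MeasureTheory.Measure ℝ) [IsProbabilityMeasure q] (hq : q ((Set.Icc 0 M)ᶜ) = 0)
    (w : ℝ → MeasureTheory.Measure ℝ → ℝ)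
    (hw_nonneg : ∀ x u, 0 ≤ w x u)
    (hw_meas : ∀ u, Measurable fun x => w x u)
    (hA1 : Assumption1 M w)
    (pstar : MeasureTheory.Measure ℝ) [IsProbabilityMeasure pstar]
    (hpstar : TendstoTV (evol w β q (MeasureTheory.Measure.dirac M)) pstar) :
    (∀ x ∈ Set.Icc (0:ℝ) M,
      Monotone (fun i => sel w (evol w β q (MeasureTheory.Measure.dirac M) i) x) ∧
      (⨆ i : ℕ, sel w (evol w β q (MeasureTheory.Measure.dirac M) i) x) ≤ sel w pstar x) ∧
    (pstar = ENNReal.ofReal (1 - β) •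
        (pstar.withDensity fun x =>
          ENNReal.ofReal (⨆ i : ℕ, sel w (evol w β q (MeasureTheory.Measure.dirac M) i) x))
      + ENNReal.ofReal β • q) ∧
    (pstar ≤ ENNReal.ofReal (1 - β) •
        (pstar.withDensity fun x => ENNReal.ofReal (sel w pstar x))
      + ENNReal.ofReal β • q) ∧
    ((∀ x ∈ Set.Icc (0:ℝ) M, ∀ u : MeasureTheory.Measure ℝ,
        IsProbabilityMeasure u → u ((Set.Icc 0 M)ᶜ) = 0 →
        ∀ ε : ℝ, 0 < ε → ∃ δ : ℝ, 0 < δ ∧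
          ∀ v : MeasureTheory.Measure ℝ, IsProbabilityMeasure v →
            v ((Set.Icc 0 M)ᶜ) = 0 →
            (∀ A : Set ℝ, MeasurableSet A → |(u A).toReal - (v A).toReal| < δ) →
            |w x u - w x v| < ε) →
      pstar = ENNReal.ofReal (1 - β) •
          (pstar.withDensity fun x => ENNReal.ofReal (sel w pstar x))
        + ENNReal.ofReal β • q) := by
  obtain ⟨hβ0, hβ1⟩ := hβ
  have h1β : (0:ℝ) < 1 - β := by linarith
  set p : ℕ → MeasureTheory.Measure ℝ := evol w β q (MeasureTheory.Measure.dirac M) with hpdef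
  have hstep : ∀ i, p (i+1) = ENNReal.ofReal (1 - β) •
      ((p i).withDensity fun x => ENNReal.ofReal (sel w (p i) x)) + ENNReal.ofReal β • q :=
    fun i => rfl
  have happly : ∀ i, ∀ A : Set ℝ, MeasurableSet A → p (i+1) A =
      ENNReal.ofReal (1 - β) * ∫⁻ x in A, ENNReal.ofReal (sel w (p i) x) ∂(p i)
        + ENNReal.ofReal β * q A := by
    intro i A hA
    rw [hstep i]
    simp [Measure.add_apply, Measure.smul_apply, smul_eq_mul, withDensity_apply _ hA]
  have hprob : ∀ i, IsProbabilityMeasure (p i) := by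
    intro i
    induction i with
    | zero =>
      have h0 : p 0 = MeasureTheory.Measure.dirac M := rfl
      rw [h0]; infer_instance
    | succ i ih =>
      haveI := ih
      constructor
      rw [happly i Set.univ MeasurableSet.univ, setLIntegral_univ,
        lintegral_sel hw_nonneg (p i), measure_univ, mul_one, mul_one,
        ← ENNReal.ofReal_add (by linarith) hβ0.le]
      norm_num
  have hsupp : ∀ i, p i ((Set.Icc 0 M)ᶜ) = 0 := by
    intro i
    induction i with
    | zero =>
      have h0 : p 0 = MeasureTheory.Measure.dirac M := rfl
      rw [h0, Measure.dirac_apply' M measurableSet_Icc.compl]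
      simp [Set.indicator, hM.le]
    | succ i ih =>
      rw [happly i _ measurableSet_Icc.compl, setLIntegral_measure_zero _ _ ih, hq]
      simp
  have hresmono : Monotone (fun i => (p i).restrict (Set.Ico 0 M)) := by
    refine monotone_nat_of_le_succ ?_
    intro i
    induction i with
    | zero =>
      have h0 : (p 0).restrict (Set.Ico 0 M) = 0 := by
        refine Measure.restrict_eq_zero.mpr ?_
        have h0' : p 0 = MeasureTheory.Measure.dirac M := rfl
        rw [h0', Measure.dirac_apply' M measurableSet_Ico]
        simp
      rw [h0]; exact Measure.zero_le _
    | succ i ih =>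
      have hsel_le : ∀ x ∈ Set.Icc (0:ℝ) M, sel w (p i) x ≤ sel w (p (i+1)) x :=
        hA1 (p (i+1)) (p i) (hprob _) (hprob _) (hsupp _) (hsupp _) ih
      rw [Measure.le_iff]
      intro s hs
      rw [Measure.restrict_apply hs, Measure.restrict_apply hs,
        happly i _ (hs.inter measurableSet_Ico), happly (i+1) _ (hs.inter measurableSet_Ico)]
      refine add_le_add_left (mul_le_mul_right (α := ℝ≥0∞) ?_ _) _
      exact setLIntegral_mono_meas ih
        (fun x hx => ENNReal.ofReal_le_ofReal (hsel_le x hx))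
        (hs.inter measurableSet_Ico) Set.inter_subset_right
  have htendA : ∀ A : Set ℝ, MeasurableSet A →
      Tendsto (fun i => ((p i) A).toReal) atTop (nhds ((pstar A).toReal)) := by
    intro A hA
    rw [Metric.tendsto_atTop]
    intro ε hε
    obtain ⟨N, hN⟩ := hpstar ε hε
    exact ⟨N, fun i hi => by rw [Real.dist_eq]; exact hN i hi A hA⟩
  have hpsupp : pstar ((Set.Icc 0 M)ᶜ) = 0 := by
    have h1 := htendA ((Set.Icc (0:ℝ) M)ᶜ) measurableSet_Icc.compl
    simp only [hsupp, ENNReal.toReal_zero] at h1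
    have h2 : (pstar ((Set.Icc 0 M)ᶜ)).toReal = 0 :=
      tendsto_nhds_unique h1 tendsto_const_nhds
    exact ((ENNReal.toReal_eq_zero_iff _).mp h2).resolve_right (measure_ne_top _ _)
  have hle_pstar_res : ∀ i, (p i).restrict (Set.Ico 0 M) ≤ pstar.restrict (Set.Ico 0 M) := by
    intro i
    rw [Measure.le_iff]
    intro s hs
    rw [Measure.restrict_apply hs, Measure.restrict_apply hs]
    have hB : MeasurableSet (s ∩ Set.Ico 0 M) := hs.inter measurableSet_Ico
    have he : (s ∩ Set.Ico 0 M) ∩ Set.Ico 0 M = s ∩ Set.Ico 0 M := by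
      rw [Set.inter_assoc, Set.inter_self]
    have hm : Monotone (fun j => ((p j) (s ∩ Set.Ico 0 M)).toReal) := by
      intro j k hjk
      have h1 := Measure.le_iff'.mp (hresmono hjk) (s ∩ Set.Ico 0 M)
      rw [Measure.restrict_apply hB, Measure.restrict_apply hB, he] at h1
      exact ENNReal.toReal_mono (measure_ne_top _ _) h1
    have hle := hm.ge_of_tendsto (htendA _ hB) i
    exact (ENNReal.toReal_le_toReal (measure_ne_top _ _) (measure_ne_top _ _)).mp hle
  have hsel_mono : ∀ x ∈ Set.Icc (0:ℝ) M, Monotone (fun i => sel w (p i) x) := by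
    intro x hx
    exact monotone_nat_of_le_succ fun i =>
      hA1 (p (i+1)) (p i) (hprob _) (hprob _) (hsupp _) (hsupp _)
        (hresmono (Nat.le_succ i)) x hx
  have hsel_le_star : ∀ i, ∀ x ∈ Set.Icc (0:ℝ) M, sel w (p i) x ≤ sel w pstar x :=
    fun i x hx => hA1 pstar (p i) inferInstance (hprob i) hpsupp (hsupp i)
      (hle_pstar_res i) x hx
  have hbdd : ∀ x ∈ Set.Icc (0:ℝ) M, BddAbove (Set.range fun i => sel w (p i) x) :=
    fun x hx => ⟨sel w pstar x, by rintro r ⟨i, rfl⟩; exact hsel_le_star i x hx⟩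
  have htendsel : ∀ x ∈ Set.Icc (0:ℝ) M,
      Tendsto (fun i => sel w (p i) x) atTop (nhds (⨆ i, sel w (p i) x)) :=
    fun x hx => tendsto_atTop_ciSup (hsel_mono x hx) (hbdd x hx)
  have hsup_le : ∀ x ∈ Set.Icc (0:ℝ) M, (⨆ i, sel w (p i) x) ≤ sel w pstar x :=
    fun x hx => ciSup_le fun i => hsel_le_star i x hx
  have hofreal_sup : ∀ x ∈ Set.Icc (0:ℝ) M,
      (⨆ i, ENNReal.ofReal (sel w (p i) x)) = ENNReal.ofReal (⨆ i, sel w (p i) x) := by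
    intro x hx
    have h1 : Tendsto (fun i => ENNReal.ofReal (sel w (p i) x)) atTop
        (nhds (ENNReal.ofReal (⨆ i, sel w (p i) x))) :=
      (ENNReal.continuous_ofReal.tendsto _).comp (htendsel x hx)
    have h2 : Monotone fun i => ENNReal.ofReal (sel w (p i) x) :=
      fun i j hij => ENNReal.ofReal_le_ofReal (hsel_mono x hx hij)
    exact tendsto_nhds_unique (tendsto_atTop_iSup h2) h1
  have hsupsetwise : ∀ B : Set ℝ, MeasurableSet B →
      (⨆ j, ((p j).restrict (Set.Ico 0 M)) B) = (pstar.restrict (Set.Ico 0 M)) B := by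
    intro B hB
    have hub : (⨆ j, ((p j).restrict (Set.Ico 0 M)) B) ≤ (pstar.restrict (Set.Ico 0 M)) B :=
      iSup_le fun j => Measure.le_iff'.mp (hle_pstar_res j) B
    have hne : (⨆ j, ((p j).restrict (Set.Ico 0 M)) B) ≠ ∞ :=
      (lt_of_le_of_lt hub (measure_lt_top _ _)).ne
    have h1 : Tendsto (fun j => ((p j).restrict (Set.Ico 0 M)) B) atTop
        (nhds (⨆ j, ((p j).restrict (Set.Ico 0 M)) B)) :=
      tendsto_atTop_iSup fun j k hjk => Measure.le_iff'.mp (hresmono hjk) B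
    have h2 := (ENNReal.tendsto_toReal hne).comp h1
    have h3 : Tendsto (fun j => (((p j).restrict (Set.Ico 0 M)) B).toReal) atTop
        (nhds ((pstar.restrict (Set.Ico 0 M) B)).toReal) := by
      have h4 := htendA (B ∩ Set.Ico 0 M) (hB.inter measurableSet_Ico)
      simpa [Measure.restrict_apply hB] using h4
    have h5 := tendsto_nhds_unique h2 h3
    exact (ENNReal.toReal_eq_toReal_iff' hne (measure_ne_top _ _)).mp h5
  have hmain : ∀ A : Set ℝ, MeasurableSet A → pstar A =
      ENNReal.ofReal (1 - β) * ∫⁻ x in A, ENNReal.ofReal (⨆ i, sel w (p i) x) ∂pstar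
        + ENNReal.ofReal β * q A := by
    intro A hA
    have hAI : MeasurableSet (A ∩ Set.Ico 0 M) := hA.inter measurableSet_Ico
    have hAM : MeasurableSet (A ∩ ({M} : Set ℝ)) := hA.inter (measurableSet_singleton M)
    set G : ℕ → ℝ → ℝ≥0∞ :=
      fun i => (A ∩ Set.Ico 0 M).indicator (fun x => ENNReal.ofReal (sel w (p i) x)) with hGdef
    have hGmeas : ∀ i, Measurable (G i) :=
      fun i => ((sel_measurable hw_meas (p i)).ennreal_ofReal).indicator hAI
    have hGmono : Monotone G := by
      intro i j hij x
      by_cases hx : x ∈ A ∩ Set.Ico 0 M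
      · simp only [hGdef, Set.indicator_of_mem hx]
        exact ENNReal.ofReal_le_ofReal
          (hsel_mono x (Set.Ico_subset_Icc_self hx.2) hij)
      · simp [hGdef, Set.indicator_of_notMem hx]
    set T : ℕ → ℝ≥0∞ :=
      fun i => ∫⁻ x in A ∩ Set.Ico 0 M, ENNReal.ofReal (sel w (p i) x) ∂(p i) with hTdef
    have hGconv : ∀ i, ∫⁻ x, G i x ∂((p i).restrict (Set.Ico 0 M)) = T i :=
      fun i => indicator_lintegral_restrict hAI Set.inter_subset_right _
    have hTmono : Monotone T := by
      intro i j hij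
      rw [← hGconv i, ← hGconv j]
      exact lintegral_mono' (hresmono hij) (hGmono hij)
    set Tinf : ℝ≥0∞ :=
      ∫⁻ x in A ∩ Set.Ico 0 M, ENNReal.ofReal (⨆ i, sel w (p i) x) ∂pstar with hTinfdef
    have hGsupconv : ∫⁻ x, (⨆ i, G i x) ∂(pstar.restrict (Set.Ico 0 M)) = Tinf := by
      have h1 : (fun x => ⨆ i, G i x) =
          (A ∩ Set.Ico 0 M).indicator (fun x => ENNReal.ofReal (⨆ i, sel w (p i) x)) := by
        funext x
        by_cases hx : x ∈ A ∩ Set.Ico 0 M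
        · simp only [hGdef, Set.indicator_of_mem hx]
          exact hofreal_sup x (Set.Ico_subset_Icc_self hx.2)
        · simp [hGdef, Set.indicator_of_notMem hx]
      rw [h1]
      exact indicator_lintegral_restrict hAI Set.inter_subset_right _
    have hTsup : (⨆ i, T i) = Tinf := by
      refine le_antisymm ?_ ?_
      · refine iSup_le fun i => ?_
        rw [← hGconv i, ← hGsupconv]
        exact lintegral_mono' (hle_pstar_res i) (fun x => le_iSup (fun j => G j x) i)
      · rw [← hGsupconv, lintegral_iSup (fun i => hGmeas i) hGmono]
        refine iSup_le fun i => ?_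
        rw [← lintegral_of_iSup_meas hresmono hsupsetwise (hGmeas i)]
        refine iSup_le fun j => ?_
        calc ∫⁻ x, G i x ∂((p j).restrict (Set.Ico 0 M))
            ≤ ∫⁻ x, G (max i j) x ∂((p (max i j)).restrict (Set.Ico 0 M)) :=
              lintegral_mono' (hresmono (le_max_right i j)) (hGmono (le_max_left i j))
          _ = T (max i j) := hGconv _
          _ ≤ ⨆ k, T k := le_iSup T (max i j)
    have hTinf_le_one : Tinf ≤ 1 := by
      calc Tinf ≤ ∫⁻ x in A ∩ Set.Ico 0 M, ENNReal.ofReal (sel w pstar x) ∂pstar := by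
            rw [hTinfdef]
            refine setLIntegral_mono' hAI fun x hx => ?_
            exact ENNReal.ofReal_le_ofReal
              (hsup_le x (Set.Ico_subset_Icc_self hx.2))
        _ ≤ ∫⁻ x, ENNReal.ofReal (sel w pstar x) ∂pstar := setLIntegral_le_lintegral _ _
        _ = 1 := lintegral_sel hw_nonneg pstar
    have hTne : Tinf ≠ ∞ := (lt_of_le_of_lt hTinf_le_one ENNReal.one_lt_top).ne
    have hTconv : Tendsto (fun i => (T i).toReal) atTop (nhds Tinf.toReal) := by
      have h1 : Tendsto T atTop (nhds (⨆ i, T i)) := tendsto_atTop_iSup hTmono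
      rw [hTsup] at h1
      exact (ENNReal.tendsto_toReal hTne).comp h1
    have hMmem : M ∈ Set.Icc (0:ℝ) M := ⟨hM.le, le_refl M⟩
    have hBconv : Tendsto (fun i => sel w (p i) M * ((p i) (A ∩ {M})).toReal) atTop
        (nhds ((⨆ i, sel w (p i) M) * (pstar (A ∩ {M})).toReal)) :=
      (htendsel M hMmem).mul (htendA _ hAM)
    have hTile : ∀ i, T i ≤ 1 := by
      intro i
      haveI := hprob i
      calc T i ≤ ∫⁻ x, ENNReal.ofReal (sel w (p i) x) ∂(p i) :=
            setLIntegral_le_lintegral _ _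
        _ = 1 := lintegral_sel hw_nonneg (p i)
    have hLi : ∀ i, ((p (i+1)) A).toReal =
        (1 - β) * ((T i).toReal + sel w (p i) M * ((p i) (A ∩ {M})).toReal)
          + β * (q A).toReal := by
      intro i
      have hsplit := split_lintegral hM.le (p i) (hsupp i)
        (fun x => ENNReal.ofReal (sel w (p i) x)) hA
      rw [happly i A hA, hsplit]
      have hfin1 : T i ≠ ∞ := (lt_of_le_of_lt (hTile i) ENNReal.one_lt_top).ne
      have hfin2 : ENNReal.ofReal (sel w (p i) M) * (p i) (A ∩ {M}) ≠ ∞ :=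
        ENNReal.mul_ne_top ENNReal.ofReal_ne_top (measure_ne_top _ _)
      rw [ENNReal.toReal_add (ENNReal.mul_ne_top ENNReal.ofReal_ne_top
            (ENNReal.add_ne_top.mpr ⟨hfin1, hfin2⟩))
          (ENNReal.mul_ne_top ENNReal.ofReal_ne_top (measure_ne_top _ _)),
        ENNReal.toReal_mul, ENNReal.toReal_mul,
        ENNReal.toReal_add hfin1 hfin2, ENNReal.toReal_mul,
        ENNReal.toReal_ofReal (by linarith : (0:ℝ) ≤ 1 - β),
        ENNReal.toReal_ofReal hβ0.le,
        ENNReal.toReal_ofReal (sel_nonneg hw_nonneg (p i) M)]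
    have hlim2 : Tendsto (fun i => ((p (i+1)) A).toReal) atTop (nhds ((pstar A).toReal)) :=
      (htendA A hA).comp (tendsto_add_atTop_nat 1)
    have hlim3 : Tendsto (fun i => ((p (i+1)) A).toReal) atTop
        (nhds ((1 - β) * (Tinf.toReal + (⨆ i, sel w (p i) M) * (pstar (A ∩ {M})).toReal)
          + β * (q A).toReal)) := by
      refine Tendsto.congr (fun i => (hLi i).symm) ?_
      exact ((hTconv.add hBconv).const_mul (1 - β)).add_const (β * (q A).toReal)
    have hkey := tendsto_nhds_unique hlim2 hlim3
    have hRsplit := split_lintegral hM.le pstar hpsupp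
      (fun x => ENNReal.ofReal (⨆ i, sel w (p i) x)) hA
    have hatomfin : ENNReal.ofReal (⨆ i, sel w (p i) M) * pstar (A ∩ {M}) ≠ ∞ :=
      ENNReal.mul_ne_top ENNReal.ofReal_ne_top (measure_ne_top _ _)
    have hRfin : ENNReal.ofReal (1 - β) *
        (∫⁻ x in A, ENNReal.ofReal (⨆ i, sel w (p i) x) ∂pstar)
        + ENNReal.ofReal β * q A ≠ ∞ := by
      rw [hRsplit]
      exact ENNReal.add_ne_top.mpr ⟨ENNReal.mul_ne_top ENNReal.ofReal_ne_top
        (ENNReal.add_ne_top.mpr ⟨hTne, hatomfin⟩),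
        ENNReal.mul_ne_top ENNReal.ofReal_ne_top (measure_ne_top _ _)⟩
    refine (ENNReal.toReal_eq_toReal_iff' (measure_ne_top _ _) hRfin).mp ?_
    have hsupM_nonneg : (0:ℝ) ≤ ⨆ i, sel w (p i) M :=
      le_trans (sel_nonneg hw_nonneg (p 0) M) (le_ciSup (hbdd M hMmem) 0)
    rw [hRsplit, ENNReal.toReal_add (ENNReal.mul_ne_top ENNReal.ofReal_ne_top
          (ENNReal.add_ne_top.mpr ⟨hTne, hatomfin⟩))
        (ENNReal.mul_ne_top ENNReal.ofReal_ne_top (measure_ne_top _ _)),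
      ENNReal.toReal_mul, ENNReal.toReal_mul,
      ENNReal.toReal_add hTne hatomfin, ENNReal.toReal_mul,
      ENNReal.toReal_ofReal (by linarith : (0:ℝ) ≤ 1 - β),
      ENNReal.toReal_ofReal hβ0.le,
      ENNReal.toReal_ofReal hsupM_nonneg]
    exact hkey
  have hii : pstar = ENNReal.ofReal (1 - β) •
      (pstar.withDensity fun x => ENNReal.ofReal (⨆ i, sel w (p i) x))
      + ENNReal.ofReal β • q := by
    ext A hA
    rw [Measure.add_apply, Measure.smul_apply, Measure.smul_apply, smul_eq_mul, smul_eq_mul,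
      withDensity_apply _ hA]
    exact hmain A hA
  have haeIcc : ∀ᵐ x ∂pstar, x ∈ Set.Icc (0:ℝ) M := by
    rw [ae_iff]
    have he : {a : ℝ | ¬ a ∈ Set.Icc (0:ℝ) M} = (Set.Icc (0:ℝ) M)ᶜ := rfl
    rw [he]; exact hpsupp
  have haele : (fun x => ENNReal.ofReal (⨆ i, sel w (p i) x)) ≤ᵐ[pstar]
      fun x => ENNReal.ofReal (sel w pstar x) :=
    haeIcc.mono fun x hx => ENNReal.ofReal_le_ofReal (hsup_le x hx)
  have hiii : pstar ≤ ENNReal.ofReal (1 - β) •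
      (pstar.withDensity fun x => ENNReal.ofReal (sel w pstar x))
      + ENNReal.ofReal β • q := by
    calc pstar = ENNReal.ofReal (1 - β) •
        (pstar.withDensity fun x => ENNReal.ofReal (⨆ i, sel w (p i) x))
        + ENNReal.ofReal β • q := hii
      _ ≤ _ := by
        refine Measure.le_iff'.mpr fun s => ?_
        simp only [Measure.add_apply, Measure.smul_apply, smul_eq_mul]
        exact add_le_add
          (mul_le_mul_right (Measure.le_iff'.mp (withDensity_mono haele) s) _) le_rfl
  have hiv : pstar = ENNReal.ofReal (1 - β) •
      (pstar.withDensity fun x => ENNReal.ofReal (sel w pstar x))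
      + ENNReal.ofReal β • q := by
    have hwd : (pstar.withDensity fun x => ENNReal.ofReal (⨆ i, sel w (p i) x)) =
        pstar.withDensity fun x => ENNReal.ofReal (sel w pstar x) := by
      set G' : ℝ → ℝ≥0∞ := (Set.Icc (0:ℝ) M).indicator
        (fun x => ⨆ i, ENNReal.ofReal (sel w (p i) x)) with hG'def
      have hG'meas : Measurable G' :=
        (Measurable.iSup fun i => (sel_measurable hw_meas (p i)).ennreal_ofReal).indicator
          measurableSet_Icc
      have hG'ae : (fun x => ENNReal.ofReal (⨆ i, sel w (p i) x)) =ᵐ[pstar] G' :=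
        haeIcc.mono fun x hx => by
          rw [hG'def]
          simp only [Set.indicator_of_mem hx]
          exact (hofreal_sup x hx).symm
      have hG'le : G' ≤ᵐ[pstar] fun x => ENNReal.ofReal (sel w pstar x) :=
        hG'ae.symm.le.trans haele
      have hint_star : ∫⁻ x, ENNReal.ofReal (sel w pstar x) ∂pstar = 1 :=
        lintegral_sel hw_nonneg pstar
      have hint_sup_le : ∫⁻ x, ENNReal.ofReal (⨆ i, sel w (p i) x) ∂pstar ≤ 1 := by
        rw [← hint_star]; exact lintegral_mono_ae haele
      have hsupfin : ∫⁻ x, ENNReal.ofReal (⨆ i, sel w (p i) x) ∂pstar ≠ ∞ :=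
        (lt_of_le_of_lt hint_sup_le ENNReal.one_lt_top).ne
      have huniv : (1:ℝ≥0∞) = ENNReal.ofReal (1 - β) *
          ∫⁻ x, ENNReal.ofReal (⨆ i, sel w (p i) x) ∂pstar + ENNReal.ofReal β := by
        have h1 := hmain Set.univ MeasurableSet.univ
        rw [measure_univ, measure_univ, mul_one, setLIntegral_univ] at h1
        exact h1
      have hint_sup : ∫⁻ x, ENNReal.ofReal (⨆ i, sel w (p i) x) ∂pstar = 1 := by
        have h2 := congrArg ENNReal.toReal huniv
        rw [ENNReal.toReal_one, ENNReal.toReal_add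
            (ENNReal.mul_ne_top ENNReal.ofReal_ne_top hsupfin) ENNReal.ofReal_ne_top,
          ENNReal.toReal_mul,
          ENNReal.toReal_ofReal (by linarith : (0:ℝ) ≤ 1 - β),
          ENNReal.toReal_ofReal hβ0.le] at h2
        have h3 : (∫⁻ x, ENNReal.ofReal (⨆ i, sel w (p i) x) ∂pstar).toReal = 1 :=
          mul_left_cancel₀ h1β.ne' (by linarith)
        refine (ENNReal.toReal_eq_toReal_iff' hsupfin ENNReal.one_ne_top).mp ?_
        rw [h3, ENNReal.toReal_one]
      have hintG' : ∫⁻ x, G' x ∂pstar = 1 := by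
        rw [← lintegral_congr_ae hG'ae]
        exact hint_sup
      have hsub : ∫⁻ x, (ENNReal.ofReal (sel w pstar x) - G' x) ∂pstar = 0 := by
        rw [lintegral_sub hG'meas (by rw [hintG']; exact ENNReal.one_ne_top) hG'le,
          hint_star, hintG', tsub_self]
      have hzero : (fun x => ENNReal.ofReal (sel w pstar x) - G' x) =ᵐ[pstar] 0 :=
        (lintegral_eq_zero_iff
          (((sel_measurable hw_meas pstar).ennreal_ofReal).sub hG'meas)).mp hsub
      have hgeae : (fun x => ENNReal.ofReal (sel w pstar x)) ≤ᵐ[pstar] G' :=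
        hzero.mono fun x hx => by
          simpa [tsub_eq_zero_iff_le] using hx
      have heqae : G' =ᵐ[pstar] fun x => ENNReal.ofReal (sel w pstar x) :=
        hG'le.antisymm hgeae
      exact withDensity_congr_ae (hG'ae.trans heqae)
    calc pstar = ENNReal.ofReal (1 - β) •
        (pstar.withDensity fun x => ENNReal.ofReal (⨆ i, sel w (p i) x))
        + ENNReal.ofReal β • q := hii
      _ = _ := by rw [hwd]
  exact ⟨fun x hx => ⟨hsel_mono x hx, hsup_le x hx⟩, hii, hiii, fun _ => hiv⟩
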